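/- arXiv:1811.03526 — 5 statements merged into one kernel-verified Lean document; each statement's English description precedes it below -/
import Mathlib

section
/- For every r ∈ (r₊, ∞), the derivative of r ↦ r²/Υ(r) equals (2/(r·Υ(r)²))·(r² − 3Mr + 2Q²). Consequently r²/Υ(r) is strictly decreasing on (r₊, r_P] and strictly increasing on [r_P, ∞), attaining its strict global minimum over (r₊, ∞) at the photon-sphere radius r = r_P. -/
noncomputable section

/-- The Reissner–Nordström lapse function `Υ(r) = 1 - 2M/r + Q²/r²`. -/
def Upsilon (M Q r : ℝ) : ℝ := 1 - 2*M/r + Q^2/r^2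

/-- The event horizon radius `r₊ = M + √(M² - Q²)`. -/
def rplus (M Q : ℝ) : ℝ := M + Real.sqrt (M^2 - Q^2)

/-- The photon-sphere radius `r_P = (3M + √(9M² - 8Q²))/2`. -/
def rP (M Q : ℝ) : ℝ := (3*M + Real.sqrt (9*M^2 - 8*Q^2)) / 2

theorem rsqOverUpsilon_min_at_photonSphere (M Q : ℝ) (hM : 0 < M) (hQ : |Q| < M) :
    (∀ r ∈ Set.Ioi (rplus M Q),
      HasDerivAt (fun s => s^2 / Upsilon M Q s)
        ((2 / (r * (Upsilon M Q r)^2)) * (r^2 - 3*M*r + 2*Q^2)) r) ∧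
    StrictAntiOn (fun r => r^2 / Upsilon M Q r) (Set.Ioc (rplus M Q) (rP M Q)) ∧
    StrictMonoOn (fun r => r^2 / Upsilon M Q r) (Set.Ici (rP M Q)) ∧
    rplus M Q < rP M Q ∧
    (∀ r ∈ Set.Ioi (rplus M Q), r ≠ rP M Q →
      (rP M Q)^2 / Upsilon M Q (rP M Q) < r^2 / Upsilon M Q r) := by
  have hQM : Q^2 < M^2 := by
    have h := abs_lt.mp hQ
    nlinarith [h.1, h.2]
  set s := Real.sqrt (M^2 - Q^2) with hsdef
  set t := Real.sqrt (9*M^2 - 8*Q^2) with htdef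
  have hs2 : s^2 = M^2 - Q^2 := Real.sq_sqrt (by nlinarith)
  have hsnn : 0 ≤ s := Real.sqrt_nonneg _
  have ht2 : t^2 = 9*M^2 - 8*Q^2 := Real.sq_sqrt (by nlinarith)
  have htpos : 0 < t := Real.sqrt_pos.mpr (by nlinarith)
  have hrp : rplus M Q = M + s := rfl
  have hrP : rP M Q = (3*M + t)/2 := rfl
  have htM : M < t := by
    have : M^2 < t^2 := by nlinarith
    nlinarith
  have hrppos : 0 < rplus M Q := by rw [hrp]; linarith
  -- quadratic positivity above the horizon
  have hquad : ∀ r, rplus M Q < r → 0 < r^2 - 2*M*r + Q^2 := by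
    intro r hr
    rw [hrp] at hr
    have h1 : 0 < r - (M + s) := by linarith
    have h2 : 0 < r - (M - s) := by linarith
    nlinarith [mul_pos h1 h2]
  have hUpos : ∀ r, rplus M Q < r → 0 < Upsilon M Q r := by
    intro r hr
    have hr0 : 0 < r := hrppos.trans hr
    have : Upsilon M Q r = (r^2 - 2*M*r + Q^2)/r^2 := by
      unfold Upsilon; field_simp
    rw [this]
    exact div_pos (hquad r hr) (by positivity)
  have hUeq : ∀ r : ℝ, 0 < r → Upsilon M Q r = (r^2 - 2*M*r + Q^2)/r^2 := by
    intro r hr0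
    unfold Upsilon; field_simp
  have hderiv : ∀ r ∈ Set.Ioi (rplus M Q),
      HasDerivAt (fun s => s^2 / Upsilon M Q s)
        ((2 / (r * (Upsilon M Q r)^2)) * (r^2 - 3*M*r + 2*Q^2)) r := by
    intro r hr
    have hr' : rplus M Q < r := hr
    have hr0 : 0 < r := hrppos.trans hr'
    have hD : 0 < r^2 - 2*M*r + Q^2 := hquad r hr'
    have hnum : HasDerivAt (fun x : ℝ => x^4) (4*r^3) r := by
      simpa using hasDerivAt_pow 4 r
    have hden : HasDerivAt (fun x : ℝ => x^2 - 2*M*x + Q^2) (2*r - 2*M) r := by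
      have h1 : HasDerivAt (fun x : ℝ => x^2) (2*r) r := by
        simpa using hasDerivAt_pow 2 r
      have h2 : HasDerivAt (fun x : ℝ => 2*M*x) (2*M) r := by
        simpa using (hasDerivAt_id r).const_mul (2*M)
      simpa using (h1.sub h2).add_const (Q^2)
    have hg := hnum.div hden hD.ne'
    have heq : (fun x : ℝ => x^2 / Upsilon M Q x)
        =ᶠ[nhds r] (fun x : ℝ => x^4 / (x^2 - 2*M*x + Q^2)) := by
      filter_upwards [isOpen_Ioi.mem_nhds (show (0:ℝ) < r from hr0)] with x hx
      rw [hUeq x hx, div_div_eq_mul_div]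
      ring_nf
    refine HasDerivAt.congr_of_eventuallyEq ?_ heq
    refine hg.congr_deriv (Eq.symm ?_)
    rw [hUeq r hr0]
    have hU : 0 < Upsilon M Q r := hUpos r hr'
    field_simp
    ring
  have hrPgt : rplus M Q < rP M Q := by
    rw [hrp, hrP]
    have h2s : 2*s < t + M := by
      have h1 : (2*s)^2 < (t + M)^2 := by nlinarith
      nlinarith [abs_nonneg (2*s), sq_abs (2*s)]
    linarith
  -- sign of the quadratic r² - 3Mr + 2Q²
  have hrm : (3*M - t)/2 < rplus M Q := by
    rw [hrp]; linarith
  have hfac : ∀ x : ℝ, x^2 - 3*M*x + 2*Q^2 = (x - (3*M + t)/2) * (x - (3*M - t)/2) := by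
    intro x; nlinarith [ht2]
  have hnegQ : ∀ x, rplus M Q < x → x < rP M Q → x^2 - 3*M*x + 2*Q^2 < 0 := by
    intro x hx1 hx2
    rw [hfac x]
    apply mul_neg_of_neg_of_pos
    · rw [hrP] at hx2; linarith
    · have := hrm; linarith
  have hposQ : ∀ x, rP M Q < x → 0 < x^2 - 3*M*x + 2*Q^2 := by
    intro x hx
    rw [hfac x]
    rw [hrP] at hx
    apply mul_pos <;> linarith
  have hcoefpos : ∀ x, rplus M Q < x → 0 < 2 / (x * (Upsilon M Q x)^2) := by
    intro x hx
    have hx0 : 0 < x := hrppos.trans hx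
    have hU := hUpos x hx
    positivity
  have hanti : StrictAntiOn (fun r => r^2 / Upsilon M Q r)
      (Set.Ioc (rplus M Q) (rP M Q)) := by
    apply strictAntiOn_of_deriv_neg (convex_Ioc _ _)
    · intro x hx
      exact (hderiv x hx.1).continuousAt.continuousWithinAt
    · intro x hx
      rw [interior_Ioc] at hx
      rw [(hderiv x hx.1).deriv]
      exact mul_neg_of_pos_of_neg (hcoefpos x hx.1) (hnegQ x hx.1 hx.2)
  have hmono : StrictMonoOn (fun r => r^2 / Upsilon M Q r) (Set.Ici (rP M Q)) := by
    apply strictMonoOn_of_deriv_pos (convex_Ici _)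
    · intro x hx
      have : rplus M Q < x := lt_of_lt_of_le hrPgt hx
      exact (hderiv x this).continuousAt.continuousWithinAt
    · intro x hx
      rw [interior_Ici] at hx
      have hx' : rplus M Q < x := hrPgt.trans hx
      rw [(hderiv x hx').deriv]
      exact mul_pos (hcoefpos x hx') (hposQ x hx)
  refine ⟨hderiv, hanti, hmono, hrPgt, ?_⟩
  intro r hr hne
  rcases lt_or_gt_of_ne hne with h | h
  · exact hanti ⟨hr, h.le⟩ ⟨hrPgt, le_refl _⟩ h
  · exact hmono (Set.self_mem_Ici) h.le h
end
end

section
/- The constant C_* := w_* · ∫_{r_P}^{r_*} s²/Υ(s) ds satisfies 0 < C_* ≤ 2r_*·(r_* − r_P); consequently r_*² − C_* ≥ r_*·(2r_P − r_*) > 0. -/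
noncomputable section

/-- The radius `r_* = 2M + √(4M² - 3Q²)`. -/
def rstar (M Q : ℝ) : ℝ := 2*M + Real.sqrt (4*M^2 - 3*Q^2)

/-- The constant `w_* = (2/r_*)·Υ(r_*)`. -/
def wstar (M Q : ℝ) : ℝ := (2 / rstar M Q) * Upsilon M Q (rstar M Q)

/-- The constant `C_* = w_* · ∫_{r_P}^{r_*} s²/Υ(s) ds`. -/
def Cstar (M Q : ℝ) : ℝ :=
  wstar M Q * ∫ s in (rP M Q)..(rstar M Q), s^2 / Upsilon M Q s

set_option maxHeartbeats 1000000 in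
theorem Cstar_bounds (M Q : ℝ) (hM : 0 < M) (hQ : |Q| < M) :
    0 < Cstar M Q ∧
    Cstar M Q ≤ 2 * rstar M Q * (rstar M Q - rP M Q) ∧
    rstar M Q * (2 * rP M Q - rstar M Q) ≤ (rstar M Q)^2 - Cstar M Q ∧
    0 < rstar M Q * (2 * rP M Q - rstar M Q) := by
  have hQ2 : Q^2 < M^2 := by
    have := abs_nonneg Q
    nlinarith [sq_abs Q]
  set a := Real.sqrt (9*M^2 - 8*Q^2) with ha_def
  set b := Real.sqrt (4*M^2 - 3*Q^2) with hb_def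
  have ha2 : a^2 = 9*M^2 - 8*Q^2 := Real.sq_sqrt (by nlinarith)
  have hb2 : b^2 = 4*M^2 - 3*Q^2 := Real.sq_sqrt (by nlinarith)
  have ha0 : 0 ≤ a := Real.sqrt_nonneg _
  have hb0 : 0 ≤ b := Real.sqrt_nonneg _
  have haM : M < a := by nlinarith
  have hbM : M < b := by nlinarith
  have hC : Cstar M Q = (2 / rstar M Q * Upsilon M Q (rstar M Q)) *
      ∫ s in (rP M Q)..(rstar M Q), s^2 / Upsilon M Q s := rfl
  rw [hC]
  set r := rstar M Q with hr_def
  set p := rP M Q with hp_def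
  have hpval : p = (3*M + a)/2 := by rw [hp_def, rP]
  have hrval : r = 2*M + b := by rw [hr_def, rstar]
  have hrP : 2*M < p := by rw [hpval]; linarith
  have hrP0 : 0 < p := by linarith
  have hr0 : 0 < r := by rw [hrval]; linarith
  have hPr : p < r := by
    rw [hpval, hrval]
    have h : a < M + 2*b := by nlinarith
    linarith
  have h2P : r < 2 * p := by
    rw [hpval, hrval]
    have h : b < M + a := by nlinarith
    linarith
  -- the quadratic s² - 3Ms + 2Q² is nonnegative for s ≥ p
  have hquad : ∀ s : ℝ, p ≤ s → 0 ≤ s^2 - 3*M*s + 2*Q^2 := by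
    intro s hs
    rw [hpval] at hs
    nlinarith [mul_nonneg (by linarith : (0:ℝ) ≤ s - (3*M + a)/2)
      (by linarith : (0:ℝ) ≤ s - (3*M - a)/2)]
  clear_value a b
  clear hpval hrval hp_def hr_def ha2 hb2 ha0 hb0 haM hbM ha_def hb_def
  clear_value r p
  clear hQ hQ2
  -- Upsilon is positive for s > 2M
  have hUps : ∀ s : ℝ, 2*M < s → 0 < Upsilon M Q s := by
    intro s hs
    have hs0 : 0 < s := by linarith
    rw [Upsilon]
    have h1 : 2*M/s < 1 := by rw [div_lt_one hs0]; linarith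
    have h2 : 0 ≤ Q^2/s^2 := by positivity
    linarith
  have hUpr : 0 < Upsilon M Q r := hUps r (by linarith)
  -- continuity of the integrand on [p, r]
  have hcont : ContinuousOn (fun s => s^2 / Upsilon M Q s) (Set.Icc p r) := by
    apply ContinuousOn.div
    · exact (continuous_pow 2).continuousOn
    · unfold Upsilon
      apply ContinuousOn.add
      · apply ContinuousOn.sub continuousOn_const
        exact ContinuousOn.div continuousOn_const continuousOn_id
          (fun x hx => ne_of_gt (lt_of_lt_of_le hrP0 hx.1))
      · exact ContinuousOn.div continuousOn_const ((continuous_pow 2).continuousOn)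
          (fun x hx => pow_ne_zero 2 (ne_of_gt (lt_of_lt_of_le hrP0 hx.1)))
    · intro x hx
      exact ne_of_gt (hUps x (by linarith [hx.1]))
  have hInt : IntervalIntegrable (fun s => s^2 / Upsilon M Q s) MeasureTheory.volume p r := by
    apply ContinuousOn.intervalIntegrable
    rwa [Set.uIcc_of_le hPr.le]
  -- pointwise bound
  have hbound : ∀ s ∈ Set.Icc p r, s^2 / Upsilon M Q s ≤ r^2 / Upsilon M Q r := by
    intro s hs
    obtain ⟨hs1, hs2⟩ := hs
    have hs2M : 2*M < s := by linarith
    have hs0 : 0 < s := by linarith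
    have hUs : 0 < Upsilon M Q s := hUps s hs2M
    rw [div_le_div_iff₀ hUs hUpr]
    have hXs : 0 ≤ s^2 - 3*M*s + 2*Q^2 := hquad s hs1
    have hrs : 0 ≤ r - s := by linarith
    have key : s^4 * (r^2 - 2*M*r + Q^2) ≤ r^4 * (s^2 - 2*M*s + Q^2) := by
      have f1 : 0 ≤ (r - s) * (s*r*(s+r)*(s^2 - 3*M*s + 2*Q^2)) := by positivity
      have f2 : 0 ≤ (r - s) * (s^2*r*(r-s)*(2*s-3*M)) := by
        apply mul_nonneg hrs
        apply mul_nonneg (mul_nonneg (by positivity) hrs)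
        linarith
      have f3 : 0 ≤ (r - s) * (s*r*(r-s)^2*(s-2*M)) := by
        apply mul_nonneg hrs
        apply mul_nonneg (by positivity)
        linarith
      have f4 : 0 ≤ (r - s) * ((r-s)^2*Q^2*(r+s)) := by positivity
      nlinarith [f1, f2, f3, f4]
    rw [Upsilon, Upsilon]
    have e1 : s^2 * (1 - 2*M/r + Q^2/r^2) = (s^4 * (r^2 - 2*M*r + Q^2)) / (r^2 * s^2) := by
      field_simp
    have e2 : r^2 * (1 - 2*M/s + Q^2/s^2) = (r^4 * (s^2 - 2*M*s + Q^2)) / (r^2 * s^2) := by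
      field_simp
    rw [e1, e2]
    exact (div_le_div_iff_of_pos_right (by positivity)).mpr key
  -- the integral
  set I := ∫ s in p..r, s^2 / Upsilon M Q s with hI_def
  have hIpos : 0 < I := by
    apply intervalIntegral.intervalIntegral_pos_of_pos_on hInt _ hPr
    intro x hx
    have hx2M : 2*M < x := by linarith [hx.1]
    exact div_pos (pow_pos (by linarith) 2) (hUps x hx2M)
  have hIle : I ≤ (r - p) * (r^2 / Upsilon M Q r) := by
    have h := intervalIntegral.integral_mono_on hPr.le hInt
      (intervalIntegrable_const (c := r^2 / Upsilon M Q r)) hbound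
    rw [intervalIntegral.integral_const, smul_eq_mul] at h
    exact h
  have hw : 0 < 2 / r * Upsilon M Q r := by positivity
  have hC1 : 0 < 2 / r * Upsilon M Q r * I := by positivity
  have hwval : (2 / r * Upsilon M Q r) * (r^2 / Upsilon M Q r) = 2 * r := by
    field_simp
  have hC2 : 2 / r * Upsilon M Q r * I ≤ 2 * r * (r - p) := by
    calc 2 / r * Upsilon M Q r * I
        ≤ 2 / r * Upsilon M Q r * ((r - p) * (r^2 / Upsilon M Q r)) :=
        mul_le_mul_of_nonneg_left hIle hw.le
    _ = ((2 / r * Upsilon M Q r) * (r^2 / Upsilon M Q r)) * (r - p) := by ring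
    _ = 2 * r * (r - p) := by rw [hwval]
  refine ⟨hC1, hC2, by nlinarith, by nlinarith⟩
end
end

section
/- For every r with r_P ≤ r < (4/3)·r_P, one has (4/r³) · ∫_{r_P}^{r} s²/Υ(s) ds < 1/Υ(r). -/
noncomputable section

theorem integral_bound_below_fourThirds_rP (M Q : ℝ) (hM : 0 < M) (hQ : |Q| < M) :
    ∀ r : ℝ, rP M Q ≤ r → r < (4/3) * rP M Q →
      (4 / r^3) * (∫ s in (rP M Q)..r, s^2 / Upsilon M Q s) < 1 / Upsilon M Q r := by
  intro r hr1 hr2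
  have hQnn : 0 ≤ |Q| := abs_nonneg Q
  have hQ2 : Q^2 < M^2 := by nlinarith [sq_abs Q]
  set S := Real.sqrt (9*M^2 - 8*Q^2) with hS
  have hSnn : 0 ≤ 9*M^2 - 8*Q^2 := by nlinarith
  have hS2 : S^2 = 9*M^2 - 8*Q^2 := Real.sq_sqrt hSnn
  have hSM : M ≤ S := by
    have h := Real.sqrt_le_sqrt (show M^2 ≤ 9*M^2 - 8*Q^2 by nlinarith)
    rwa [Real.sqrt_sq hM.le] at h
  set p := rP M Q with hp
  have hp2M : 2*M ≤ p := by rw [hp, rP]; linarith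
  have hppos : 0 < p := by linarith
  have hproot : p^2 - 3*M*p + 2*Q^2 = 0 := by
    rw [hp, rP, ← hS]; linear_combination hS2 / 4
  have hg : ∀ x, p ≤ x → 0 ≤ x^2 - 3*M*x + 2*Q^2 := by
    intro x hx
    nlinarith [mul_nonneg (sub_nonneg.mpr hx) (show (0:ℝ) ≤ x + p - 3*M by linarith)]
  have hUeq : ∀ x : ℝ, 0 < x → Upsilon M Q x = (x^2 - 2*M*x + Q^2)/x^2 := by
    intro x hx; rw [Upsilon]; field_simp
  have hU : ∀ x, p ≤ x → 0 < Upsilon M Q x := by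
    intro x hx
    have hx0 : 0 < x := lt_of_lt_of_le hppos hx
    have key : 0 < x^2 - 2*M*x + Q^2 := by nlinarith [hg x hx]
    rw [hUeq x hx0]; positivity
  have hr0 : 0 < r := lt_of_lt_of_le hppos hr1
  have hUr := hU r hr1
  -- monotone bound on the integrand
  have hmono : ∀ s, p ≤ s → s ≤ r → s^2 / Upsilon M Q s ≤ r^2 / Upsilon M Q r := by
    intro s hs hsr
    have hUs := hU s hs
    have hs0 : 0 < s := lt_of_lt_of_le hppos hs
    rw [div_le_div_iff₀ hUs hUr, hUeq s hs0, hUeq r hr0]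
    rw [← mul_div_assoc, ← mul_div_assoc, div_le_div_iff₀ (by positivity) (by positivity)]
    have hs2M : 2*M ≤ s := le_trans hp2M hs
    have h4q : 0 ≤ s^2 - 4*Q^2 := by nlinarith
    have hrs : 0 ≤ r - s := sub_nonneg.mpr hsr
    have h1 : 0 ≤ (r-s)*((s^2-3*M*s+2*Q^2)*(s*r^3)) :=
      mul_nonneg hrs (mul_nonneg (hg s hs) (by positivity))
    have h2 : 0 ≤ (r-s)*((r^2-3*M*r+2*Q^2)*s^4) :=
      mul_nonneg hrs (mul_nonneg (hg r hr1) (by positivity))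
    have h3 : 0 ≤ (r-s)*((s^2-3*M*s+2*Q^2)*(r*s*(r^2+4*r*s+s^2))) :=
      mul_nonneg hrs (mul_nonneg (hg s hs) (by positivity))
    have h4 : 0 ≤ (r-s)^2*(r*s*((s^2-4*Q^2)*(2*r+s))) :=
      mul_nonneg (sq_nonneg _) (mul_nonneg (mul_pos hr0 hs0).le
        (mul_nonneg h4q (by positivity)))
    have h5 : 0 ≤ (r-s)^2*(r^2*s*Q^2) := mul_nonneg (sq_nonneg _) (by positivity)
    have hid : 6*s*(r^2*((s^2-2*M*s+Q^2))*r^2 - s^2*((r^2-2*M*r+Q^2))*s^2) =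
        3*((r-s)*((s^2-3*M*s+2*Q^2)*(s*r^3))) + 3*((r-s)*((r^2-3*M*r+2*Q^2)*s^4)) +
        (r-s)*((s^2-3*M*s+2*Q^2)*(r*s*(r^2+4*r*s+s^2))) +
        (r-s)^2*(r*s*((s^2-4*Q^2)*(2*r+s))) + 6*((r-s)^2*(r^2*s*Q^2)) := by ring
    have h6 : 0 ≤ 6*s*(r^2*((s^2-2*M*s+Q^2))*r^2 - s^2*((r^2-2*M*r+Q^2))*s^2) := by
      rw [hid]; linarith
    have hdiff := (mul_nonneg_iff_of_pos_left (show (0:ℝ) < 6*s by linarith)).mp h6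
    linarith
  -- continuity / integrability
  have hUcont : ContinuousOn (Upsilon M Q) (Set.uIcc p r) := by
    rw [Set.uIcc_of_le hr1]
    have : ∀ x ∈ Set.Icc p r, x ≠ 0 := fun x hx => (lt_of_lt_of_le hppos hx.1).ne'
    unfold Upsilon
    exact ((continuousOn_const.sub ((continuousOn_const).div continuousOn_id this)).add
      ((continuousOn_const).div (continuousOn_pow 2) (fun x hx => pow_ne_zero 2 (this x hx))))
  have hUne : ∀ x ∈ Set.uIcc p r, Upsilon M Q x ≠ 0 := by
    rw [Set.uIcc_of_le hr1]; exact fun x hx => (hU x hx.1).ne'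
  have hfc : ContinuousOn (fun s => s^2 / Upsilon M Q s) (Set.uIcc p r) :=
    (continuousOn_pow 2).div hUcont hUne
  have hint : IntervalIntegrable (fun s => s^2 / Upsilon M Q s) MeasureTheory.volume p r :=
    hfc.intervalIntegrable
  have hIle : (∫ s in p..r, s^2 / Upsilon M Q s) ≤ (r - p) * (r^2 / Upsilon M Q r) := by
    have h := intervalIntegral.integral_mono_on hr1 hint
      (intervalIntegrable_const) (fun s hs => hmono s hs.1 hs.2)
    simpa [smul_eq_mul, mul_div_assoc] using h
  have hkey : 4*(r - p) < r := by linarith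
  have h4r : 0 < 4 / r^3 := by positivity
  calc (4 / r^3) * (∫ s in p..r, s^2 / Upsilon M Q s)
      ≤ (4 / r^3) * ((r - p) * (r^2 / Upsilon M Q r)) := by
        exact mul_le_mul_of_nonneg_left hIle h4r.le
    _ < 1 / Upsilon M Q r := by
        rw [show (4/r^3) * ((r - p) * (r^2 / Upsilon M Q r)) = (4*(r-p))/(r * Upsilon M Q r) by
          field_simp]
        rw [div_lt_div_iff₀ (by positivity) hUr]
        nlinarith
end
end

section
/- There exists ε ∈ (0, 1) such that for all real M > 0 and Q with |Q| ≤ εM, and for every r ∈ [r_P, r_*], one has (4/r³) · ∫_{r_P}^{r} s²/Υ(s) ds < 1/Υ(r). Equivalently, the function f(r) := (w_*/r²)·∫_{r_P}^{r} s²/Υ(s) ds satisfies f'(r) − (2/r)·f(r) > 0 for every r ∈ [r_P, r_*]. -/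
noncomputable section

/-- The Morawetz multiplier `f(r) = (w_*/r²)·∫_{r_P}^{r} s²/Υ(s) ds`. -/
def Ffun (M Q : ℝ) (r : ℝ) : ℝ :=
  (wstar M Q / r^2) * ∫ s in (rP M Q)..r, s^2 / Upsilon M Q s

lemma Upsilon_eq (M Q s : ℝ) (hs : s ≠ 0) :
    Upsilon M Q s = (s^2 - 2*M*s + Q^2) / s^2 := by
  unfold Upsilon; field_simp

lemma Upsilon_pos (M Q s : ℝ) (hM : 0 < M) (hs : 2*M < s) : 0 < Upsilon M Q s := by
  have hs0 : (0:ℝ) < s := by linarith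
  rw [Upsilon_eq M Q s hs0.ne']
  apply div_pos _ (by positivity)
  nlinarith [sq_nonneg Q]

lemma Upsilon_contOn (M Q : ℝ) (hM : 0 < M) :
    ContinuousOn (fun s => s^2 / Upsilon M Q s) {s : ℝ | 2*M < s} := by
  have hne : ∀ s ∈ {s : ℝ | 2*M < s}, s ≠ 0 := by
    intro s hs; have : 2*M < s := hs; nlinarith
  have hU : ContinuousOn (fun s => Upsilon M Q s) {s : ℝ | 2*M < s} := by
    unfold Upsilon
    exact (continuousOn_const.sub (continuousOn_const.div continuousOn_id hne)).add
      (continuousOn_const.div (continuousOn_id.pow 2) (fun s hs => pow_ne_zero 2 (hne s hs)))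
  exact (continuousOn_id.pow 2).div hU
    (fun s hs => (Upsilon_pos M Q s hM hs).ne')

/-- Pointwise bound on the integrand. -/
lemma integrand_bound (M Q s : ℝ) (hM : 0 < M) (h1 : 29933/10000*M ≤ s) (h2 : s ≤ 4*M) :
    s^2 / Upsilon M Q s ≤ 5*M*s + 61/5*M^2 := by
  have hs2 : 2*M < s := by nlinarith
  have hs0 : (0:ℝ) < s := by linarith
  have hx : (0:ℝ) ≤ s - 29933/10000*M := by linarith
  have hy : (0:ℝ) ≤ 4*M - s := by linarith
  have hD : 0 < s^2 - 2*M*s + Q^2 := by nlinarith [sq_nonneg Q]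
  rw [Upsilon_eq M Q s hs0.ne', div_div_eq_mul_div, div_le_iff₀ hD]
  nlinarith [mul_nonneg hx (mul_nonneg (mul_nonneg hM.le hM.le) hM.le),
    mul_nonneg (mul_nonneg hx hy) (mul_nonneg hM.le hM.le),
    mul_nonneg (mul_nonneg (mul_nonneg hx hx) hy) hM.le,
    mul_nonneg (mul_nonneg (mul_nonneg hx hx) hx) hy,
    mul_pos (mul_pos (mul_pos hM hM) hM) hM,
    mul_nonneg (by nlinarith : (0:ℝ) ≤ 5*M*s + 61/5*M^2) (sq_nonneg Q)]

/-- The key polynomial inequality. -/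
lemma final_poly (M r : ℝ) (hM : 0 < M) (h1 : 29933/10000*M ≤ r) (h2 : r ≤ 4*M) :
    (5*M*((r^2 - (29933/10000*M)^2)/2) + 61/5*M^2*(r - 29933/10000*M))
      * (4*(r^2 - 2*M*r + M^2/100)) < r^5 := by
  have hx : (0:ℝ) ≤ r - 29933/10000*M := by linarith
  have hy : (0:ℝ) ≤ 4*M - r := by linarith
  nlinarith [mul_nonneg hy (mul_nonneg (mul_nonneg hM.le hM.le) (mul_nonneg hM.le hM.le)),
    mul_nonneg (mul_nonneg hx hy) (mul_nonneg (mul_nonneg hM.le hM.le) hM.le),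
    mul_nonneg (mul_nonneg (mul_nonneg hx hx) hy) (mul_nonneg hM.le hM.le),
    mul_nonneg (mul_nonneg (mul_nonneg (mul_nonneg hx hx) hx) hx) hM.le,
    mul_nonneg (mul_nonneg (mul_nonneg (mul_nonneg hx hx) hx) hx) hx,
    mul_pos (mul_pos (mul_pos hM hM) hM) (mul_pos hM hM)]

set_option maxHeartbeats 1000000 in
theorem f_prime_minus_two_over_r_f_pos_small_charge :
    ∃ ε : ℝ, 0 < ε ∧ ε < 1 ∧
      ∀ M Q : ℝ, 0 < M → |Q| ≤ ε * M →
        ∀ r : ℝ, rP M Q ≤ r → r ≤ rstar M Q →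
          ((4 / r^3) * (∫ s in (rP M Q)..r, s^2 / Upsilon M Q s)
              < 1 / Upsilon M Q r) ∧
          0 < deriv (Ffun M Q) r - (2 / r) * Ffun M Q r := by
  refine ⟨1/10, by norm_num, by norm_num, ?_⟩
  intro M Q hM hQ r har hrb
  have hQ2 : Q^2 ≤ M^2/100 := by nlinarith [sq_abs Q, abs_nonneg Q]
  -- bounds on rP and rstar
  have hsqP : 14933/5000*M ≤ Real.sqrt (9*M^2 - 8*Q^2) := by
    have h := Real.sqrt_le_sqrt (show (14933/5000*M)^2 ≤ 9*M^2 - 8*Q^2 by nlinarith)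
    rwa [Real.sqrt_sq (by positivity)] at h
  have ha_lb : 29933/10000*M ≤ rP M Q := by
    unfold rP; linarith
  have hsqb : Real.sqrt (4*M^2 - 3*Q^2) ≤ 2*M := by
    have h := Real.sqrt_le_sqrt (show 4*M^2 - 3*Q^2 ≤ (2*M)^2 by nlinarith)
    rwa [Real.sqrt_sq (by positivity)] at h
  have hb_ub : rstar M Q ≤ 4*M := by unfold rstar; linarith
  have hb_lb : 2*M < rstar M Q := by
    have : 0 < Real.sqrt (4*M^2 - 3*Q^2) := Real.sqrt_pos.2 (by nlinarith)
    unfold rstar; linarith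
  have hr_lb : 29933/10000*M ≤ r := le_trans ha_lb har
  have hr_ub : r ≤ 4*M := le_trans hrb hb_ub
  have hr2M : 2*M < r := by nlinarith
  have hr0 : (0:ℝ) < r := by linarith
  have hUr : 0 < Upsilon M Q r := Upsilon_pos M Q r hM hr2M
  set a := rP M Q with ha_def
  set g : ℝ → ℝ := fun s => s^2 / Upsilon M Q s with hg_def
  -- integrability
  have hsub : Set.Icc a r ⊆ {s : ℝ | 2*M < s} := by
    intro s hs; simp only [Set.mem_setOf_eq]; have := hs.1; nlinarith
  have hopen : IsOpen {s : ℝ | 2*M < s} := isOpen_lt continuous_const continuous_id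
  have hgint : IntervalIntegrable g MeasureTheory.volume a r := by
    apply ContinuousOn.intervalIntegrable
    rw [Set.uIcc_of_le har]
    exact (Upsilon_contOn M Q hM).mono hsub
  have hlinint : IntervalIntegrable (fun s => 5*M*s + 61/5*M^2) MeasureTheory.volume a r :=
    (Continuous.intervalIntegrable (by continuity) a r)
  -- the integral bound
  set I := ∫ s in a..r, g s with hI_def
  have hImono : I ≤ ∫ s in a..r, (5*M*s + 61/5*M^2) := by
    apply intervalIntegral.integral_mono_on har hgint hlinint
    intro s hs
    exact integrand_bound M Q s hM (by nlinarith [hs.1]) (by nlinarith [hs.2])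
  have hIval : (∫ s in a..r, (5*M*s + 61/5*M^2))
      = 5*M*((r^2 - a^2)/2) + 61/5*M^2*(r - a) := by
    rw [intervalIntegral.integral_add ((intervalIntegral.intervalIntegrable_id).const_mul (5*M))
      intervalIntegrable_const, intervalIntegral.integral_const_mul, integral_id,
      intervalIntegral.integral_const]
    simp [smul_eq_mul]; ring
  have hLB : I ≤ 5*M*((r^2 - (29933/10000*M)^2)/2) + 61/5*M^2*(r - 29933/10000*M) := by
    rw [hIval] at hImono
    have h1 : r^2 - a^2 ≤ r^2 - (29933/10000*M)^2 := by nlinarith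
    have h2 : r - a ≤ r - 29933/10000*M := by linarith
    nlinarith [mul_nonneg hM.le (by linarith : (0:ℝ) ≤ (r^2 - (29933/10000*M)^2) - (r^2 - a^2)),
      mul_nonneg (mul_nonneg hM.le hM.le) (by linarith : (0:ℝ) ≤ (r - 29933/10000*M) - (r - a))]
  have hL0 : 0 ≤ 5*M*((r^2 - (29933/10000*M)^2)/2) + 61/5*M^2*(r - 29933/10000*M) := by
    have e1 : 0 ≤ r^2 - (29933/10000*M)^2 := by nlinarith
    have e2 : 0 ≤ r - 29933/10000*M := by linarith
    positivity
  have hpoly := final_poly M r hM hr_lb hr_ub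
  have hDpos : 0 < r^2 - 2*M*r + Q^2 := by nlinarith [sq_nonneg Q]
  have hLD : (5*M*((r^2 - (29933/10000*M)^2)/2) + 61/5*M^2*(r - 29933/10000*M))
      * (4*(r^2 - 2*M*r + Q^2)) < r^5 := by
    nlinarith [hpoly, mul_nonneg hL0
      (by nlinarith : (0:ℝ) ≤ 4*(r^2 - 2*M*r + M^2/100) - 4*(r^2 - 2*M*r + Q^2))]
  -- key inequality : I < r^3 / (4 * Upsilon)
  have hkey : I < r^3 / (4 * Upsilon M Q r) := by
    have heq : r^3 / (4 * Upsilon M Q r) = r^5 / (4*(r^2 - 2*M*r + Q^2)) := by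
      rw [Upsilon_eq M Q r hr0.ne']
      field_simp
    rw [heq, lt_div_iff₀ (by linarith)]
    calc I * (4*(r^2 - 2*M*r + Q^2))
        ≤ (5*M*((r^2 - (29933/10000*M)^2)/2) + 61/5*M^2*(r - 29933/10000*M))
            * (4*(r^2 - 2*M*r + Q^2)) :=
          mul_le_mul_of_nonneg_right hLB (by linarith)
      _ < r^5 := hLD
  -- first conclusion
  have hfirst : (4 / r^3) * I < 1 / Upsilon M Q r := by
    have h := mul_lt_mul_of_pos_left hkey (show (0:ℝ) < 4 / r^3 by positivity)
    have heq2 : (4 / r^3) * (r^3 / (4 * Upsilon M Q r)) = 1 / Upsilon M Q r := by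
      field_simp
    rwa [heq2] at h
  refine ⟨hfirst, ?_⟩
  -- derivative part
  have hwpos : 0 < wstar M Q := by
    unfold wstar
    exact mul_pos (div_pos (by norm_num) (by linarith)) (Upsilon_pos M Q _ hM hb_lb)
  have hrmem : r ∈ {s : ℝ | 2*M < s} := hr2M
  have hcont := Upsilon_contOn M Q hM
  have hIderiv : HasDerivAt (fun t => ∫ s in a..t, g s) (g r) r :=
    intervalIntegral.integral_hasDerivAt_right hgint
      (hcont.stronglyMeasurableAtFilter hopen r hrmem)
      (hcont.continuousAt (hopen.mem_nhds hrmem))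
  have hpow : HasDerivAt (fun t : ℝ => wstar M Q * (t^2)⁻¹)
      (wstar M Q * (-(2*r^(2-1)) / (r^2)^2)) r :=
    (((hasDerivAt_pow 2 r).inv (by positivity)).const_mul (wstar M Q))
  have hF : HasDerivAt (Ffun M Q)
      (wstar M Q * (-(2*r^(2-1)) / (r^2)^2) * I + (wstar M Q * (r^2)⁻¹) * g r) r := by
    have h := hpow.mul hIderiv
    have : Ffun M Q = fun t => (wstar M Q * (t^2)⁻¹) * ∫ s in a..t, g s := by
      funext t; simp [Ffun, div_eq_mul_inv, ha_def, hg_def]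
    rw [this]
    exact h
  have hgr : g r = r^2 / Upsilon M Q r := rfl
  have hFr : Ffun M Q r = wstar M Q / r^2 * I := rfl
  have hDeq : deriv (Ffun M Q) r - (2 / r) * Ffun M Q r
      = wstar M Q * (1 / Upsilon M Q r - (4 / r^3) * I) := by
    rw [hF.deriv, hFr, hgr]
    field_simp
    ring
  rw [hDeq]
  exact mul_pos hwpos (by linarith)
end
end

section
/- There exist a constant c > 0 and functions f, w on the exterior interval (r₊, ∞), with f twice continuously differentiable and w continuously differentiable, related by w(r) = r⁻²·Υ(r)·d/dr( r²·f(r) ), such that for every r ∈ (r₊, ∞) the following three bounds hold: f(r)·(r² − 3Mr + 2Q²)/r³ ≥ c·(r² − 3Mr + 2Q²)²/r⁵; f'(r) ≥ c/r³; and the function r ↦ r²·Υ(r)·w'(r) is non-increasing on (r₊, ∞). -/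
noncomputable section

set_option maxHeartbeats 2000000 in
lemma morawetz_hard_ineq (M s t x : ℝ) (hM : 0 < M) (hs : 0 < s) (hsM : s ≤ M)
    (ht2 : t^2 = M^2 + 8*s^2) (ht0 : 0 < t) (hx : 0 ≤ x) :
    0 ≤ 3*((3*M+t)/2+x)^5*(((3*M+t)/2-(M+s))*((3*M+t)/2-(M-s)))
      - 2*x*((((3*M+t)/2+x))^2+((3*M+t)/2+x)*((3*M+t)/2)+((3*M+t)/2)^2
            +3*M*(((3*M+t)/2+x)+(3*M+t)/2)+9*M^2+3*s^2)
          *((((3*M+t)/2+x)-(M+s))*(((3*M+t)/2+x)-(M-s))*((3*M+t)/2-(M+s))*((3*M+t)/2-(M-s)))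
      - 6*(M+s)^4*x*(((3*M+t)/2+x)-(M+s))*((3*M+t)/2-(M-s))
      - 24*M*(M^2+s^2)*x*((((3*M+t)/2+x)-(M+s))*(((3*M+t)/2+x)-(M-s)))*((3*M+t)/2-(M+s))
      - M^3*((((3*M+t)/2+x)-(M+s))*(((3*M+t)/2+x)-(M-s))*((3*M+t)/2-(M+s))*((3*M+t)/2-(M-s))) := by
  have hts : s ≤ t := by nlinarith
  have key : 3*((3*M+t)/2+x)^5*(((3*M+t)/2-(M+s))*((3*M+t)/2-(M-s)))
      - 2*x*((((3*M+t)/2+x))^2+((3*M+t)/2+x)*((3*M+t)/2)+((3*M+t)/2)^2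
            +3*M*(((3*M+t)/2+x)+(3*M+t)/2)+9*M^2+3*s^2)
          *((((3*M+t)/2+x)-(M+s))*(((3*M+t)/2+x)-(M-s))*((3*M+t)/2-(M+s))*((3*M+t)/2-(M-s)))
      - 6*(M+s)^4*x*(((3*M+t)/2+x)-(M+s))*((3*M+t)/2-(M-s))
      - 24*M*(M^2+s^2)*x*((((3*M+t)/2+x)-(M+s))*(((3*M+t)/2+x)-(M-s)))*((3*M+t)/2-(M+s))
      - M^3*((((3*M+t)/2+x)-(M+s))*(((3*M+t)/2+x)-(M-s))*((3*M+t)/2-(M+s))*((3*M+t)/2-(M-s)))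
      = 2*(t+M)*M^2*x^2*(x-M)^2
      + (6*s^6*t + 114*M*s^6 + 117*M^2*s^4*t + 548*M^3*s^4 + (385/2)*M^4*s^2*t
          + (759/2)*M^5*s^2 + (95/2)*M^6*t + (95/2)*M^7)
      + x*(36*s^6 + 72*M*s^4*t + 486*M^2*s^4 + (439/2)*M^3*s^2*t + (989/2)*M^4*s^2
          + 71*M^5*t + 71*M^6)
      + x^2*(6*s^4*(t-s) + 12*M*s^3*t + 18*M*s^4 + 24*M^2*s^2*(t-s) + 21*M^2*s^2*t
          + 12*M^3*s*t + 74*M^3*s^2 + (31/2)*M^4*t + 6*M^4*s + (31/2)*M^5)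
      + x^3*(16*s^4 + 7*M*s^2*t + 24*M*s^3 + 45*M^2*s^2 + 24*M^3*s)
      + x^4*((5/2)*s^2*t + (31/2)*M*s^2 + 2*M^2*t + 2*M^3)
      + x^5*(s^2 + (1/2)*M*t + (1/2)*M^2) := by
    linear_combination ((1/4)*x^5 + (5/8)*t*x^4 + (5/8)*t^2*x^3 + (3/8)*t^3*x^2 + (9/64)*t^4*x + (3/128)*t^5 + (3/2)*s^2*x^3 + (3/4)*s^2*t*x^2 + (9/16)*s^2*t^2*x + (3/32)*s^2*t^3 + (9/2)*s^4*x + (3/4)*s^4*t + (21/8)*M*x^4 + 4*M*t*x^3 + (15/4)*M*t^2*x^2 + (63/32)*M*t^3*x + (51/128)*M*t^4 + (27/4)*M*s^2*x^2 + 9*M*s^2*t*x + (57/32)*M*s^2*t^2 + (57/4)*M*s^4 + (59/8)*M^2*x^3 + (111/8)*M^2*t*x^2 + (45/4)*M^2*t^2*x + (183/64)*M^2*t^3 + (963/16)*M^2*s^2*x + (465/32)*M^2*s^2*t + (83/4)*M^3*x^2 + (1081/32)*M^3*t*x + (719/64)*M^3*t^2 + (2139/32)*M^3*s^2 + (3831/64)*M^4*x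 + (3439/128)*M^4*t + (5359/128)*M^5) * ht2
  rw [key]
  obtain ⟨e, he, rfl⟩ : ∃ e, 0 ≤ e ∧ t = s + e := ⟨t - s, by linarith, by ring⟩
  obtain ⟨a, ha, rfl⟩ : ∃ a, 0 ≤ a ∧ M = a^2 := ⟨Real.sqrt M, Real.sqrt_nonneg M, (Real.sq_sqrt hM.le).symm⟩
  obtain ⟨c, hc, rfl⟩ : ∃ c, 0 ≤ c ∧ s = c^2 := ⟨Real.sqrt s, Real.sqrt_nonneg s, (Real.sq_sqrt hs.le).symm⟩
  obtain ⟨d, hd, rfl⟩ : ∃ d, 0 ≤ d ∧ x = d^2 := ⟨Real.sqrt x, Real.sqrt_nonneg x, (Real.sq_sqrt hx).symm⟩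
  obtain ⟨g, hg, rfl⟩ : ∃ g, 0 ≤ g ∧ e = g^2 := ⟨Real.sqrt e, Real.sqrt_nonneg e, (Real.sq_sqrt he).symm⟩
  simp only [add_sub_cancel_left]
  positivity

set_option maxHeartbeats 4000000 in
theorem morawetz_multiplier_exists (M Q : ℝ) (hM : 0 < M) (hQ : |Q| < M) :
    ∃ (c : ℝ) (f w : ℝ → ℝ), 0 < c ∧
      ContDiffOn ℝ 2 f (Set.Ioi (rplus M Q)) ∧
      ContDiffOn ℝ 1 w (Set.Ioi (rplus M Q)) ∧
      (∀ r ∈ Set.Ioi (rplus M Q),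
        w r = (Upsilon M Q r / r^2) * deriv (fun s => s^2 * f s) r) ∧
      (∀ r ∈ Set.Ioi (rplus M Q),
        c * (r^2 - 3*M*r + 2*Q^2)^2 / r^5
          ≤ f r * ((r^2 - 3*M*r + 2*Q^2) / r^3)) ∧
      (∀ r ∈ Set.Ioi (rplus M Q), c / r^3 ≤ deriv f r) ∧
      AntitoneOn (fun r => r^2 * Upsilon M Q r * deriv w r)
        (Set.Ioi (rplus M Q)) := by
  have hQ2 : Q^2 < M^2 := by nlinarith [sq_abs Q, abs_nonneg Q]
  set s := Real.sqrt (M^2 - Q^2) with hsdef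
  have hs2 : s^2 = M^2 - Q^2 := Real.sq_sqrt (by linarith)
  have hs0 : 0 < s := Real.sqrt_pos.2 (by linarith)
  have hsM : s ≤ M := by nlinarith
  set t := Real.sqrt (9*M^2 - 8*Q^2) with htdef
  have ht2 : t^2 = M^2 + 8*s^2 := by
    have h9 : t^2 = 9*M^2 - 8*Q^2 := Real.sq_sqrt (by nlinarith)
    rw [h9]; linarith [hs2]
  have ht0 : 0 < t := Real.sqrt_pos.2 (by nlinarith)
  have htM : M ≤ t := by nlinarith
  have ht3 : t ≤ 3*M := by nlinarith
  have hts2 : 2*s ≤ t := by nlinarith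
  have hrpe : rplus M Q = M + s := by rw [rplus]
  set b := (3*M + t)/2 with hbdef
  have hbe : 2*b = 3*M + t := by rw [hbdef]; ring
  have hbrp : M + s + M/2 ≤ b := by rw [hbdef]; linarith
  have hbrm : M ≤ b - (M - s) := by rw [hbdef]; linarith
  have hb0 : 0 < b := by linarith
  have hrm0 : 0 ≤ M - s := by linarith
  set A := 3*(M+s)^4/(2*s) with hAdef
  set B := -(3*(M-s)^4)/(2*s) with hBdef
  have hA0 : 0 < A := by rw [hAdef]; positivity
  have hAB : A + B = 12*M*(M^2+s^2) := by
    rw [hAdef, hBdef]; field_simp; ring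
  have hAB0 : 0 < A + B := by rw [hAB]; positivity
  have hA2s : A*(2*s) = 3*(M+s)^4 := by rw [hAdef]; field_simp
  set P : ℝ → ℝ := fun r => r^3 + 3*M*r^2 + (9*M^2+3*s^2)*r
      + A*Real.log (r-(M+s)) + B*Real.log (r-(M-s)) with hPdef
  -- derivative of P
  have hPd : ∀ r : ℝ, M + s < r → HasDerivAt P (3*r^4/((r-(M+s))*(r-(M-s)))) r := by
    intro r hr
    have h1 : 0 < r - (M+s) := by linarith
    have h2 : 0 < r - (M-s) := by linarith
    have l1 : HasDerivAt (fun y : ℝ => y - (M+s)) 1 r := (hasDerivAt_id r).sub_const _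
    have l2 : HasDerivAt (fun y : ℝ => Real.log (y-(M+s))) (1/(r-(M+s))) r := l1.log h1.ne'
    have l3 : HasDerivAt (fun y : ℝ => y - (M-s)) 1 r := (hasDerivAt_id r).sub_const _
    have l4 : HasDerivAt (fun y : ℝ => Real.log (y-(M-s))) (1/(r-(M-s))) r := l3.log h2.ne'
    have p1 : HasDerivAt (fun y : ℝ => y^3) (3*r^2) r := by
      simpa using hasDerivAt_pow 3 r
    have p2 : HasDerivAt (fun y : ℝ => 3*M*y^2) (3*M*(2*r)) r := by
      simpa using (hasDerivAt_pow 2 r).const_mul (3*M)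
    have p3 : HasDerivAt (fun y : ℝ => (9*M^2+3*s^2)*y) (9*M^2+3*s^2) r := by
      simpa using (hasDerivAt_id r).const_mul (9*M^2+3*s^2)
    have hd : HasDerivAt P ((3*r^2 + 3*M*(2*r) + (9*M^2+3*s^2)) + A*(1/(r-(M+s))) + B*(1/(r-(M-s)))) r := by
      rw [hPdef]
      exact (((p1.add p2).add p3).add (l2.const_mul A)).add (l4.const_mul B)
    convert hd using 1
    rw [hAdef, hBdef]
    field_simp
    ring
  -- basic identity for X
  have hXid : ∀ r : ℝ, r^2 - 3*M*r + 2*Q^2 = (r-b)*(r+b-3*M) := by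
    intro r
    rw [hbdef]
    linear_combination (1/4)*ht2 + 2*hs2
  refine ⟨min M (M^3), fun r => (P r - P b)/r^2, fun _ => 3,
    lt_min hM (by positivity), ?_, contDiffOn_const, ?_, ?_, ?_, ?_⟩
  · -- ContDiffOn f
    rw [hrpe]
    apply ContDiffOn.div
    · apply ContDiffOn.sub _ contDiffOn_const
      rw [hPdef]
      have c1 : ContDiffOn ℝ 2 (fun r : ℝ => r^3 + 3*M*r^2 + (9*M^2+3*s^2)*r) (Set.Ioi (M+s)) := by
        apply ContDiff.contDiffOn
        exact ((contDiff_id.pow 3).add (contDiff_const.mul (contDiff_id.pow 2))).add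
          (contDiff_const.mul contDiff_id)
      have c2 : ContDiffOn ℝ 2 (fun r : ℝ => A*Real.log (r-(M+s))) (Set.Ioi (M+s)) := by
        apply ContDiffOn.mul contDiffOn_const
        apply ContDiffOn.log (contDiffOn_id.sub contDiffOn_const)
        intro x hx
        have hx' : M + s < x := hx
        have : (0:ℝ) < x - (M+s) := by linarith
        exact this.ne'
      have c3 : ContDiffOn ℝ 2 (fun r : ℝ => B*Real.log (r-(M-s))) (Set.Ioi (M+s)) := by
        apply ContDiffOn.mul contDiffOn_const
        apply ContDiffOn.log (contDiffOn_id.sub contDiffOn_const)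
        intro x hx
        have hx' : M + s < x := hx
        have : (0:ℝ) < x - (M-s) := by linarith
        exact this.ne'
      exact (c1.add c2).add c3
    · exact ContDiff.contDiffOn (contDiff_id.pow 2)
    · intro x hx
      have : M + s < x := hx
      have hx0 : (0:ℝ) < x := by linarith
      positivity
  · -- w equation
    intro r hr
    rw [hrpe] at hr
    have hr' : M + s < r := hr
    have hr0 : (0:ℝ) < r := by linarith
    have h1 : 0 < r - (M+s) := by linarith
    have h2 : 0 < r - (M-s) := by linarith
    have hFd : HasDerivAt (fun y => P y - P b) (3*r^4/((r-(M+s))*(r-(M-s)))) r :=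
      (hPd r hr').sub_const _
    have hee : (fun y : ℝ => y^2 * ((P y - P b)/y^2)) =ᶠ[nhds r] (fun y => P y - P b) := by
      filter_upwards [eventually_ne_nhds hr0.ne'] with y hy
      field_simp
    have hde : deriv (fun y : ℝ => y^2 * ((P y - P b)/y^2)) r
        = 3*r^4/((r-(M+s))*(r-(M-s))) := by
      rw [hee.deriv_eq, hFd.deriv]
    have hq2' : Q^2 = M^2 - s^2 := by linarith
    have hU : Upsilon M Q r = (r-(M+s))*(r-(M-s))/r^2 := by
      rw [Upsilon, hq2']
      field_simp
      ring
    rw [hde, hU]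
    field_simp
  · -- condition (1)
    intro r hr
    rw [hrpe] at hr
    have hr' : M + s < r := hr
    have hr0 : (0:ℝ) < r := by linarith
    have h1 : 0 < r - (M+s) := by linarith
    have h2 : 0 < r - (M-s) := by linarith
    have hb1 : 0 < b - (M+s) := by linarith
    have hb2 : 0 < b - (M-s) := by linarith
    -- log bounds
    have hu2 : Real.log (r-(M-s)) - Real.log (b-(M-s)) ≤ (r-b)/(b-(M-s)) := by
      have h := Real.log_le_sub_one_of_pos (show (0:ℝ) < (r-(M-s))/(b-(M-s)) by positivity)
      rw [Real.log_div h2.ne' hb2.ne'] at h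
      have he : (r-(M-s))/(b-(M-s)) - 1 = (r-b)/(b-(M-s)) := by
        field_simp
        ring
      linarith
    have hl2 : (r-b)/(r-(M-s)) ≤ Real.log (r-(M-s)) - Real.log (b-(M-s)) := by
      have h := Real.log_le_sub_one_of_pos (show (0:ℝ) < (b-(M-s))/(r-(M-s)) by positivity)
      rw [Real.log_div hb2.ne' h2.ne'] at h
      have he : (b-(M-s))/(r-(M-s)) - 1 = -((r-b)/(r-(M-s))) := by
        field_simp
        ring
      linarith
    have hu1 : (Real.log (r-(M+s)) - Real.log (b-(M+s))) - (Real.log (r-(M-s)) - Real.log (b-(M-s)))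
        ≤ 2*s*(r-b)/((b-(M+s))*(r-(M-s))) := by
      have h := Real.log_le_sub_one_of_pos
        (show (0:ℝ) < ((r-(M+s))*(b-(M-s)))/((b-(M+s))*(r-(M-s))) by positivity)
      rw [Real.log_div (by positivity) (by positivity), Real.log_mul h1.ne' hb2.ne',
        Real.log_mul hb1.ne' h2.ne'] at h
      have he : ((r-(M+s))*(b-(M-s)))/((b-(M+s))*(r-(M-s))) - 1
          = 2*s*(r-b)/((b-(M+s))*(r-(M-s))) := by
        field_simp
        ring
      linarith
    have hl1 : 2*s*(r-b)/((b-(M-s))*(r-(M+s)))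
        ≤ (Real.log (r-(M+s)) - Real.log (b-(M+s))) - (Real.log (r-(M-s)) - Real.log (b-(M-s))) := by
      have h := Real.log_le_sub_one_of_pos
        (show (0:ℝ) < ((b-(M+s))*(r-(M-s)))/((r-(M+s))*(b-(M-s))) by positivity)
      rw [Real.log_div (by positivity) (by positivity), Real.log_mul hb1.ne' h2.ne',
        Real.log_mul h1.ne' hb2.ne'] at h
      have he : ((b-(M+s))*(r-(M-s)))/((r-(M+s))*(b-(M-s))) - 1
          = -(2*s*(r-b)/((b-(M-s))*(r-(M+s)))) := by
        field_simp
        ring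
      linarith
    -- decomposition of F
    have hFdec : P r - P b = (r^3-b^3+3*M*(r^2-b^2)+(9*M^2+3*s^2)*(r-b))
        + A*((Real.log (r-(M+s)) - Real.log (b-(M+s))) - (Real.log (r-(M-s)) - Real.log (b-(M-s))))
        + (A+B)*(Real.log (r-(M-s)) - Real.log (b-(M-s))) := by
      rw [hPdef]; ring
    set X := r^2 - 3*M*r + 2*Q^2 with hXdef
    have hX : X = (r-b)*(r+b-3*M) := hXid r
    have hmain : min M (M^3) * X^2 ≤ (P r - P b) * X := by
      have hcM : min M (M^3) ≤ M := min_le_left _ _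
      rcases le_total b r with hbr | hrb
      · -- r ≥ b : X ≥ 0
        have hX0 : 0 ≤ X := by
          rw [hX]
          apply mul_nonneg (by linarith)
          linarith [hbe, htM]
        have hGMX : (r^3-b^3+3*M*(r^2-b^2)+(9*M^2+3*s^2)*(r-b)) - M*X
            = (r-b)*(r^2+r*b+b^2+2*M*(r+b)+12*M^2+3*s^2) := by
          rw [hX]; ring
        have hbr' : 0 ≤ r - b := by linarith
        have hpos1 : 0 ≤ (r-b)*(r^2+r*b+b^2+2*M*(r+b)+12*M^2+3*s^2) := by
          apply mul_nonneg hbr'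
          nlinarith
        have hpos2 : 0 ≤ A*(2*s*(r-b)/((b-(M-s))*(r-(M+s)))) := by
          apply mul_nonneg hA0.le
          apply div_nonneg (by positivity) (by positivity)
        have hpos3 : 0 ≤ (A+B)*((r-b)/(r-(M-s))) := by
          apply mul_nonneg hAB0.le
          apply div_nonneg hbr' h2.le
        have hF_ge : M*X ≤ P r - P b := by
          rw [hFdec]
          have t1 : A*(2*s*(r-b)/((b-(M-s))*(r-(M+s))))
              ≤ A*((Real.log (r-(M+s)) - Real.log (b-(M+s))) - (Real.log (r-(M-s)) - Real.log (b-(M-s)))) :=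
            mul_le_mul_of_nonneg_left hl1 hA0.le
          have t2 : (A+B)*((r-b)/(r-(M-s)))
              ≤ (A+B)*(Real.log (r-(M-s)) - Real.log (b-(M-s))) :=
            mul_le_mul_of_nonneg_left hl2 hAB0.le
          linarith [hpos1, hpos2, hpos3, t1, t2, hGMX]
        have hcX : min M (M^3) * X ≤ M * X := mul_le_mul_of_nonneg_right hcM hX0
        calc min M (M^3) * X^2 = (min M (M^3) * X) * X := by ring
          _ ≤ (M*X) * X := mul_le_mul_of_nonneg_right hcX hX0
          _ ≤ (P r - P b) * X := mul_le_mul_of_nonneg_right hF_ge hX0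
      · -- r ≤ b : X ≤ 0
        have hX0 : X ≤ 0 := by
          rw [hX]
          apply mul_nonpos_of_nonpos_of_nonneg (by linarith)
          linarith [hbe, htM]
        have hGMX : (r^3-b^3+3*M*(r^2-b^2)+(9*M^2+3*s^2)*(r-b)) - M*X
            = (r-b)*(r^2+r*b+b^2+2*M*(r+b)+12*M^2+3*s^2) := by
          rw [hX]; ring
        have hrb' : r - b ≤ 0 := by linarith
        have hneg1 : (r-b)*(r^2+r*b+b^2+2*M*(r+b)+12*M^2+3*s^2) ≤ 0 := by
          apply mul_nonpos_of_nonpos_of_nonneg hrb'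
          nlinarith
        have hneg2 : A*(2*s*(r-b)/((b-(M+s))*(r-(M-s)))) ≤ 0 := by
          apply mul_nonpos_of_nonneg_of_nonpos hA0.le
          apply div_nonpos_of_nonpos_of_nonneg (by nlinarith) (by positivity)
        have hneg3 : (A+B)*((r-b)/(b-(M-s))) ≤ 0 := by
          apply mul_nonpos_of_nonneg_of_nonpos hAB0.le
          apply div_nonpos_of_nonpos_of_nonneg hrb' hb2.le
        have hF_le : P r - P b ≤ M*X := by
          rw [hFdec]
          have t1 : A*((Real.log (r-(M+s)) - Real.log (b-(M+s))) - (Real.log (r-(M-s)) - Real.log (b-(M-s))))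
              ≤ A*(2*s*(r-b)/((b-(M+s))*(r-(M-s)))) :=
            mul_le_mul_of_nonneg_left hu1 hA0.le
          have t2 : (A+B)*(Real.log (r-(M-s)) - Real.log (b-(M-s)))
              ≤ (A+B)*((r-b)/(b-(M-s))) :=
            mul_le_mul_of_nonneg_left hu2 hAB0.le
          linarith [hneg1, hneg2, hneg3, t1, t2, hGMX]
        have hcX : M * X ≤ min M (M^3) * X := by
          have := mul_le_mul_of_nonpos_right hcM hX0
          linarith [this]
        have hFcX : P r - P b ≤ min M (M^3) * X := le_trans hF_le hcX
        calc min M (M^3) * X^2 = (min M (M^3) * X) * X := by ring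
          _ ≤ (P r - P b) * X := mul_le_mul_of_nonpos_right hFcX hX0
    -- conclude
    have hrw : (P r - P b)/r^2 * (X/r^3) = ((P r - P b) * X)/r^5 := by
      rw [div_mul_div_comm]
      congr 1
      ring
    rw [hrw]
    exact div_le_div_of_nonneg_right hmain (by positivity)
  · -- condition (2)
    intro r hr
    rw [hrpe] at hr
    have hr' : M + s < r := hr
    have hr0 : (0:ℝ) < r := by linarith
    have h1 : 0 < r - (M+s) := by linarith
    have h2 : 0 < r - (M-s) := by linarith
    have hb1 : 0 < b - (M+s) := by linarith
    have hb2 : 0 < b - (M-s) := by linarith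
    have hFd : HasDerivAt (fun y => P y - P b) (3*r^4/((r-(M+s))*(r-(M-s)))) r :=
      (hPd r hr').sub_const _
    have hr2 : HasDerivAt (fun y : ℝ => y^2) (2*r) r := by
      simpa using hasDerivAt_pow 2 r
    have hfd : HasDerivAt (fun y => (P y - P b)/y^2)
        ((3*r^4/((r-(M+s))*(r-(M-s))) * r^2 - (P r - P b)*(2*r))/(r^2)^2) r :=
      hFd.div hr2 (by positivity)
    rw [hfd.deriv]
    -- pure arithmetic facts (established before any log hypotheses enter the context)
    have hK2 : (0:ℝ) ≤ r^2+r*b+b^2+3*M*(r+b)+9*M^2+3*s^2 := by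
      nlinarith [mul_pos hr0 hb0, sq_nonneg s, sq_nonneg r, sq_nonneg b]
    have hD : 3*r^3 ≤ 3*r^5/((r-(M+s))*(r-(M-s))) := by
      rw [le_div_iff₀ (by positivity)]
      nlinarith [mul_le_mul_of_nonneg_left (show M ≤ r by linarith) hM.le,
        pow_pos hr0 3, sq_nonneg s]
    have hM3 : M^3 ≤ 3*r^3 := by
      nlinarith [mul_le_mul_of_nonneg_left (show M ≤ r by linarith) hM.le]
    -- key bound : M^3 ≤ 3r^5/D - 2F
    have hu2 : Real.log (r-(M-s)) - Real.log (b-(M-s)) ≤ (r-b)/(b-(M-s)) := by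
      have h := Real.log_le_sub_one_of_pos (show (0:ℝ) < (r-(M-s))/(b-(M-s)) by positivity)
      rw [Real.log_div h2.ne' hb2.ne'] at h
      have he : (r-(M-s))/(b-(M-s)) - 1 = (r-b)/(b-(M-s)) := by field_simp; ring
      linarith
    have hu1 : (Real.log (r-(M+s)) - Real.log (b-(M+s))) - (Real.log (r-(M-s)) - Real.log (b-(M-s)))
        ≤ 2*s*(r-b)/((b-(M+s))*(r-(M-s))) := by
      have h := Real.log_le_sub_one_of_pos
        (show (0:ℝ) < ((r-(M+s))*(b-(M-s)))/((b-(M+s))*(r-(M-s))) by positivity)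
      rw [Real.log_div (by positivity) (by positivity), Real.log_mul h1.ne' hb2.ne',
        Real.log_mul hb1.ne' h2.ne'] at h
      have he : ((r-(M+s))*(b-(M-s)))/((b-(M+s))*(r-(M-s))) - 1
          = 2*s*(r-b)/((b-(M+s))*(r-(M-s))) := by
        field_simp; ring
      linarith
    have hFdec : P r - P b = (r^3-b^3+3*M*(r^2-b^2)+(9*M^2+3*s^2)*(r-b))
        + A*((Real.log (r-(M+s)) - Real.log (b-(M+s))) - (Real.log (r-(M-s)) - Real.log (b-(M-s))))
        + (A+B)*(Real.log (r-(M-s)) - Real.log (b-(M-s))) := by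
      rw [hPdef]; ring
    have hFU : P r - P b ≤ (r^3-b^3+3*M*(r^2-b^2)+(9*M^2+3*s^2)*(r-b))
        + 3*(M+s)^4*(r-b)/((b-(M+s))*(r-(M-s)))
        + 12*M*(M^2+s^2)*(r-b)/(b-(M-s)) := by
      rw [hFdec]
      have t1 : A*((Real.log (r-(M+s)) - Real.log (b-(M+s))) - (Real.log (r-(M-s)) - Real.log (b-(M-s))))
          ≤ A*(2*s*(r-b)/((b-(M+s))*(r-(M-s)))) := mul_le_mul_of_nonneg_left hu1 hA0.le
      have t2 : (A+B)*(Real.log (r-(M-s)) - Real.log (b-(M-s)))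
          ≤ (A+B)*((r-b)/(b-(M-s))) := mul_le_mul_of_nonneg_left hu2 hAB0.le
      have e1 : A*(2*s*(r-b)/((b-(M+s))*(r-(M-s)))) = 3*(M+s)^4*(r-b)/((b-(M+s))*(r-(M-s))) := by
        rw [hAdef]; field_simp
      have e2 : (A+B)*((r-b)/(b-(M-s))) = 12*M*(M^2+s^2)*(r-b)/(b-(M-s)) := by
        rw [hAB]; ring
      rw [e1] at t1; rw [e2] at t2
      linarith
    have hkey : M^3 ≤ 3*r^5/((r-(M+s))*(r-(M-s))) - 2*(P r - P b) := by
      rcases le_total r b with hrb | hbr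
      · -- r ≤ b : F ≤ 0 and 3r^5/D ≥ 3r^3 ≥ 3M^3
        have hrb' : r - b ≤ 0 := by linarith
        have hG0 : (r^3-b^3+3*M*(r^2-b^2)+(9*M^2+3*s^2)*(r-b)) ≤ 0 := by
          have heq : (r^3-b^3+3*M*(r^2-b^2)+(9*M^2+3*s^2)*(r-b))
              = (r-b)*(r^2+r*b+b^2+3*M*(r+b)+9*M^2+3*s^2) := by ring
          rw [heq]
          exact mul_nonpos_of_nonpos_of_nonneg hrb' hK2
        have hT1 : 3*(M+s)^4*(r-b)/((b-(M+s))*(r-(M-s))) ≤ 0 := by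
          apply div_nonpos_of_nonpos_of_nonneg
            (mul_nonpos_of_nonneg_of_nonpos (by positivity) hrb') (by positivity)
        have hT2 : 12*M*(M^2+s^2)*(r-b)/(b-(M-s)) ≤ 0 := by
          apply div_nonpos_of_nonpos_of_nonneg
            (mul_nonpos_of_nonneg_of_nonpos (by positivity) hrb') hb2.le
        linarith [hG0, hT1, hT2, hD, hM3, hFU]
      · -- b ≤ r : hard lemma
        have hx0 : 0 ≤ r - b := by linarith
        have hhard := morawetz_hard_ineq M s t (r-b) hM hs0 hsM ht2 ht0 hx0
        have hre : (3*M+t)/2 + (r-b) = r := by rw [hbdef]; ring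
        rw [hre, ← hbdef] at hhard
        -- hhard : 0 ≤ N(r) with b
        have hNdiv : 3*r^5/((r-(M+s))*(r-(M-s)))
            - 2*((r^3-b^3+3*M*(r^2-b^2)+(9*M^2+3*s^2)*(r-b))
              + 3*(M+s)^4*(r-b)/((b-(M+s))*(r-(M-s)))
              + 12*M*(M^2+s^2)*(r-b)/(b-(M-s))) - M^3
            = (3*r^5*((b-(M+s))*(b-(M-s)))
              - 2*(r-b)*(r^2+r*b+b^2+3*M*(r+b)+9*M^2+3*s^2)
                *((r-(M+s))*(r-(M-s))*(b-(M+s))*(b-(M-s)))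
              - 6*(M+s)^4*(r-b)*(r-(M+s))*(b-(M-s))
              - 24*M*(M^2+s^2)*(r-b)*((r-(M+s))*(r-(M-s)))*(b-(M+s))
              - M^3*((r-(M+s))*(r-(M-s))*(b-(M+s))*(b-(M-s))))
              / ((r-(M+s))*(r-(M-s))*(b-(M+s))*(b-(M-s))) := by
          field_simp
          ring
        have hpos : (0:ℝ) < (r-(M+s))*(r-(M-s))*(b-(M+s))*(b-(M-s)) := by positivity
        have h0 : 0 ≤ 3*r^5/((r-(M+s))*(r-(M-s)))
            - 2*((r^3-b^3+3*M*(r^2-b^2)+(9*M^2+3*s^2)*(r-b))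
              + 3*(M+s)^4*(r-b)/((b-(M+s))*(r-(M-s)))
              + 12*M*(M^2+s^2)*(r-b)/(b-(M-s))) - M^3 := by
          rw [hNdiv]
          apply div_nonneg _ hpos.le
          convert hhard using 1
        clear hNdiv hhard
        linarith
    have hcM3 : min M (M^3) ≤ M^3 := min_le_right _ _
    have hder : (3*r^4/((r-(M+s))*(r-(M-s))) * r^2 - (P r - P b)*(2*r))/(r^2)^2
        = (3*r^5/((r-(M+s))*(r-(M-s))) - 2*(P r - P b))/r^3 := by
      field_simp
    rw [hder]
    exact div_le_div_of_nonneg_right (le_trans hcM3 hkey) (by positivity)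
  · -- antitone
    have hzero : (fun r => r^2 * Upsilon M Q r * deriv (fun _ : ℝ => (3:ℝ)) r)
        = fun _ => 0 := by
      funext r
      simp
    rw [hzero]
    intro x _ y _ _
    exact le_refl 0
end
end
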